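/- Abel double-integral identity with reciprocal weight: let 0 < E₀ < E be real numbers and let g : [E₀, E] → ℝ be continuous. Then ∫_{E₀}^{E} u^{−1} (E−u)^{−1/2} ( ∫_{E₀}^{u} g(v) (u−v)^{−1/2} dv ) du = π ∫_{E₀}^{E} g(v) (E·v)^{−1/2} dv, where all integrals converge absolutely. -/

import Mathlib

open Set MeasureTheory Real


lemma intInt_inv_sqrt_right {a b : ℝ} (hab : a ≤ b) : IntervalIntegrable (fun x => 1 / Real.sqrt (x - a)) volume a b := by
  have h0 : IntervalIntegrable (fun x : ℝ => x ^ (-(1/2) : ℝ)) volume 0 (b - a) :=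
    intervalIntegral.intervalIntegrable_rpow' (by norm_num)
  have h1 := h0.comp_sub_right a
  simp only [zero_add, sub_add_cancel] at h1
  apply h1.congr
  intro x hx
  rw [uIoc_of_le hab] at hx
  dsimp only
  rw [Real.sqrt_eq_rpow, Real.rpow_neg (by linarith [hx.1])]
  exact (one_div _).symm

lemma intInt_inv_sqrt_left {a b : ℝ} (hab : a ≤ b) : IntervalIntegrable (fun x => 1 / Real.sqrt (b - x)) volume a b := by
  have := (intInt_inv_sqrt_right (a := 0) (b := b - a) (by linarith)).comp_sub_left b
  simp only [sub_zero, sub_sub_cancel] at this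
  exact this.symm

lemma kernel_intInt {v E : ℝ} (hv : 0 < v) (hvE : v < E) :
    IntervalIntegrable (fun u => 1 / (u * Real.sqrt (E - u) * Real.sqrt (u - v))) volume v E := by
  set m : ℝ := (v + E) / 2 with hm
  have hvm : v < m := by rw [hm]; linarith
  have hmE : m < E := by rw [hm]; linarith
  have part1 : IntervalIntegrable (fun u => 1 / (u * Real.sqrt (E - u) * Real.sqrt (u - v))) volume v m := by
    have heq : (fun u => 1 / (u * Real.sqrt (E - u) * Real.sqrt (u - v)))
        = fun u => (1 / (u * Real.sqrt (E - u))) * (1 / Real.sqrt (u - v)) := by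
      funext u; rw [div_mul_div_comm, one_mul]
    rw [heq]
    apply (intInt_inv_sqrt_right hvm.le).continuousOn_mul
    apply ContinuousOn.div continuousOn_const
    · exact (continuousOn_id.mul ((continuous_sqrt.comp (continuous_const.sub continuous_id)).continuousOn))
    · intro x hx
      rw [uIcc_of_le hvm.le] at hx
      have hx0 : 0 < x := lt_of_lt_of_le hv hx.1
      have : 0 < Real.sqrt (E - x) := Real.sqrt_pos.mpr (by have := hx.2; rw [hm] at this; linarith)
      positivity
  have part2 : IntervalIntegrable (fun u => 1 / (u * Real.sqrt (E - u) * Real.sqrt (u - v))) volume m E := by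
    have heq : (fun u => 1 / (u * Real.sqrt (E - u) * Real.sqrt (u - v)))
        = fun u => (1 / (u * Real.sqrt (u - v))) * (1 / Real.sqrt (E - u)) := by
      funext u; rw [div_mul_div_comm, one_mul]; ring_nf
    rw [heq]
    apply (intInt_inv_sqrt_left hmE.le).continuousOn_mul
    apply ContinuousOn.div continuousOn_const
    · exact (continuousOn_id.mul ((continuous_sqrt.comp (continuous_id.sub continuous_const)).continuousOn))
    · intro x hx
      rw [uIcc_of_le hmE.le] at hx
      have hx0 : 0 < x := lt_of_lt_of_le (hv.trans hvm) hx.1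
      have : 0 < Real.sqrt (x - v) := Real.sqrt_pos.mpr (by have := hx.1; rw [hm] at this; linarith)
      positivity
  exact part1.trans part2


lemma abel_hasDerivAt {v E u : ℝ} (hv : 0 < v) (hvE : v < E) (hu : u ∈ Ioo v E) :
    HasDerivAt (fun u => -(Real.sqrt (E * v))⁻¹ *
        Real.arcsin ((2 * E * v - u * (E + v)) / (u * (E - v))))
      (1 / (u * Real.sqrt (E - u) * Real.sqrt (u - v))) u := by
  obtain ⟨hvu, huE⟩ := hu
  have hu0 : 0 < u := hv.trans hvu
  have hEv : 0 < E - v := by linarith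
  have hD : u * (E - v) ≠ 0 := by positivity
  set a := Real.sqrt (E * v) with ha_def
  set b := Real.sqrt (u - v) with hb_def
  set c := Real.sqrt (E - u) with hc_def
  have h1 : a ^ 2 = E * v := Real.sq_sqrt (le_of_lt (mul_pos (by linarith) hv))
  have h2 : b ^ 2 = u - v := Real.sq_sqrt (by linarith)
  have h3 : c ^ 2 = E - u := Real.sq_sqrt (by linarith)
  have ha : 0 < a := Real.sqrt_pos.mpr (mul_pos (by linarith) hv)
  have hb : 0 < b := Real.sqrt_pos.mpr (by linarith)
  have hc : 0 < c := Real.sqrt_pos.mpr (by linarith)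
  set φ : ℝ → ℝ := fun u => (2 * E * v - u * (E + v)) / (u * (E - v)) with hφdef
  have hφd : HasDerivAt φ (-(2 * E * v) / (u ^ 2 * (E - v))) u := by
    have hh := (((hasDerivAt_id u).const_mul (E + v)).const_sub (2 * E * v)).div
      ((hasDerivAt_id u).mul_const (E - v)) hD
    convert hh using 1
    · rfl
    · rfl
    · funext x; simp only [hφdef, id_eq, Pi.div_apply]; ring_nf
    · simp only [id_eq]
      rw [div_eq_div_iff (mul_pos (pow_pos hu0 2) hEv).ne' (pow_pos (mul_pos hu0 hEv) 2).ne']; ring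
  have key : 1 - φ u ^ 2 = (2 * a * b * c / (u * (E - v))) ^ 2 := by
    have expand : (2 * a * b * c / (u * (E - v))) ^ 2
        = 4 * (E * v) * ((u - v) * (E - u)) / (u * (E - v)) ^ 2 := by
      rw [div_pow, mul_pow, mul_pow, mul_pow, h1, h2, h3]; ring_nf
    rw [expand, hφdef]
    field_simp
    ring
  have hpos : 0 < 2 * a * b * c / (u * (E - v)) :=
    div_pos (by positivity) (by positivity)
  have hsq : 0 < 1 - φ u ^ 2 := by rw [key]; positivity
  have hne1 : φ u ≠ 1 := by intro hh; rw [hh] at hsq; norm_num at hsq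
  have hnen1 : φ u ≠ -1 := by intro hh; rw [hh] at hsq; norm_num at hsq
  have harc := (Real.hasDerivAt_arcsin hnen1 hne1).comp u hφd
  have hfull := harc.const_mul (-a⁻¹)
  convert hfull using 1
  · rfl
  · rfl
  · rfl
  have hsqrt : Real.sqrt (1 - φ u ^ 2) = 2 * a * b * c / (u * (E - v)) := by
    rw [key, Real.sqrt_sq hpos.le]
  rw [hsqrt]
  field_simp
  linear_combination h1

lemma kernel_integral {v E : ℝ} (hv : 0 < v) (hvE : v < E) :
    ∫ u in v..E, 1 / (u * Real.sqrt (E - u) * Real.sqrt (u - v)) = π / Real.sqrt (E * v) := by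
  set F : ℝ → ℝ := fun u => -(Real.sqrt (E * v))⁻¹ *
      Real.arcsin ((2 * E * v - u * (E + v)) / (u * (E - v))) with hF
  have hEv : 0 < E - v := by linarith
  have hcont : ContinuousOn F (Icc v E) := by
    apply continuousOn_const.mul
    apply Real.continuous_arcsin.comp_continuousOn
    apply ContinuousOn.div
    · exact (continuous_const.sub (continuous_id.mul continuous_const)).continuousOn
    · exact (continuous_id.mul continuous_const).continuousOn
    · intro x hx
      have : 0 < x := lt_of_lt_of_le hv hx.1
      positivity
  have hderiv : ∀ x ∈ Ioo v E, HasDerivWithinAt F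
      (1 / (x * Real.sqrt (E - x) * Real.sqrt (x - v))) (Ioi x) x :=
    fun x hx => (abel_hasDerivAt hv hvE hx).hasDerivWithinAt
  rw [intervalIntegral.integral_eq_sub_of_hasDeriv_right_of_le hvE.le hcont hderiv
    (kernel_intInt hv hvE)]
  have hφE : (2 * E * v - E * (E + v)) / (E * (E - v)) = -1 := by
    rw [div_eq_iff (mul_ne_zero (by linarith) (by linarith))]; ring
  have hφv : (2 * E * v - v * (E + v)) / (v * (E - v)) = 1 := by
    rw [div_eq_iff (mul_ne_zero (by linarith) (by linarith))]; ring
  rw [hF]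
  simp only [hφE, hφv, Real.arcsin_neg_one, Real.arcsin_one]
  field_simp
  ring

/-- Abel double-integral identity with reciprocal weight:
`∫_{E₀}^{E} u⁻¹ (E−u)^{−1/2} ∫_{E₀}^{u} g(v) (u−v)^{−1/2} dv du
  = π ∫_{E₀}^{E} g(v) (E·v)^{−1/2} dv` for `0 < E₀ < E`. -/
theorem abel_double_integral_reciprocal_weight (E₀ E : ℝ) (hE₀ : 0 < E₀)
    (h : E₀ < E) (g : ℝ → ℝ) (hg : ContinuousOn g (Icc E₀ E)) :
    (∀ u ∈ Ioc E₀ E,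
      IntervalIntegrable (fun v => g v / Real.sqrt (u - v)) volume E₀ u) ∧
    IntervalIntegrable
      (fun u => (∫ v in E₀..u, g v / Real.sqrt (u - v)) / (u * Real.sqrt (E - u)))
      volume E₀ E ∧
    IntervalIntegrable (fun v => g v / Real.sqrt (E * v)) volume E₀ E ∧
    (∫ u in E₀..E, (∫ v in E₀..u, g v / Real.sqrt (u - v)) / (u * Real.sqrt (E - u)))
      = π * ∫ v in E₀..E, g v / Real.sqrt (E * v) := by
  have hE : 0 < E := hE₀.trans h
  -- Part 1
  have part1 : ∀ u ∈ Ioc E₀ E,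
      IntervalIntegrable (fun v => g v / Real.sqrt (u - v)) volume E₀ u := by
    intro u hu
    have h1 : IntervalIntegrable (fun v => 1 / Real.sqrt (u - v)) volume E₀ u :=
      intInt_inv_sqrt_left hu.1.le
    have heq : (fun v => g v / Real.sqrt (u - v)) = fun v => g v * (1 / Real.sqrt (u - v)) := by
      funext v; rw [mul_one_div]
    rw [heq]
    refine h1.continuousOn_mul (hg.mono ?_)
    rw [uIcc_of_le hu.1.le]
    exact Icc_subset_Icc le_rfl hu.2
  -- setup
  set ν := volume.restrict (Ioo E₀ E) with hν
  set G : ℝ × ℝ → ℝ := fun p => g p.2 / Real.sqrt (p.1 - p.2) / (p.1 * Real.sqrt (E - p.1)) with hG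
  set S : Set (ℝ × ℝ) := {p | p.2 < p.1} with hS
  set H : ℝ × ℝ → ℝ := S.indicator G with hH
  have hSopen : IsOpen S := isOpen_lt continuous_snd continuous_fst
  have hSm : MeasurableSet S := hSopen.measurableSet
  -- pointwise representations
  have hrep : ∀ v : ℝ, (fun u => H (u, v)) = (Ioi v).indicator (fun u => G (u, v)) := by
    intro v; funext u
    by_cases hc : v < u
    · rw [Set.indicator_of_mem (mem_Ioi.mpr hc), hH,
        Set.indicator_of_mem (show (u, v) ∈ S from hc)]
    · rw [Set.indicator_of_notMem (by simpa using hc), hH,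
        Set.indicator_of_notMem (by simpa [hS] using hc)]
  have hGk : ∀ v : ℝ, (fun u => G (u, v))
      = fun u => g v * (1 / (u * Real.sqrt (E - u) * Real.sqrt (u - v))) := by
    intro v; funext u
    simp only [hG, div_eq_mul_inv, mul_inv, one_mul]
    ring
  -- measurability
  have hmeas : AEStronglyMeasurable H (ν.prod ν) := by
    rw [hν, Measure.prod_restrict, hH,
      aestronglyMeasurable_indicator_iff hSm, Measure.restrict_restrict hSm]
    apply ContinuousOn.aestronglyMeasurable _ (hSm.inter (measurableSet_Ioo.prod measurableSet_Ioo))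
    apply ContinuousOn.div
    · apply ContinuousOn.div
      · exact hg.comp continuous_snd.continuousOn
          (fun p hp => ⟨hp.2.2.1.le, hp.2.2.2.le⟩)
      · exact (continuous_sqrt.comp (continuous_fst.sub continuous_snd)).continuousOn
      · intro p hp; exact ne_of_gt (Real.sqrt_pos.mpr (sub_pos.mpr hp.1))
    · exact (continuous_fst.mul
        (continuous_sqrt.comp (continuous_const.sub continuous_fst))).continuousOn
    · intro p hp
      have h1 : 0 < p.1 := hE₀.trans hp.2.1.1
      have h2 : 0 < Real.sqrt (E - p.1) := Real.sqrt_pos.mpr (sub_pos.mpr hp.2.1.2)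
      positivity
  -- integrability in u for fixed v
  have hint_u : ∀ v ∈ Ioo E₀ E, Integrable (fun u => H (u, v)) ν := by
    intro v hv
    have hv0 : 0 < v := hE₀.trans hv.1
    have hker : IntegrableOn (fun u => 1 / (u * Real.sqrt (E - u) * Real.sqrt (u - v)))
        (Ioo v E) volume := by
      have := (intervalIntegrable_iff_integrableOn_Ioo_of_le hv.2.le).mp (kernel_intInt hv0 hv.2)
      exact this
    rw [hrep v, hν, integrable_indicator_iff measurableSet_Ioi]
    have hres : (volume.restrict (Ioo E₀ E)).restrict (Ioi v) = volume.restrict (Ioo v E) := by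
      rw [Measure.restrict_restrict measurableSet_Ioi, Ioi_inter_Ioo, max_eq_left hv.1.le]
    unfold IntegrableOn
    rw [hres, hGk v]
    exact hker.const_mul (g v)
  -- outer integral of norm for fixed v
  have houter : ∀ v ∈ Ioo E₀ E,
      (∫ u, H (u, v) ∂ν) = g v * (π / Real.sqrt (E * v)) := by
    intro v hv
    have hv0 : 0 < v := hE₀.trans hv.1
    rw [hrep v, hν]
    rw [show ∫ u, (Ioi v).indicator (fun u => G (u, v)) u ∂volume.restrict (Ioo E₀ E)
        = ∫ u in Ioo E₀ E, (Ioi v).indicator (fun u => G (u, v)) u from rfl]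
    rw [setIntegral_indicator measurableSet_Ioi, inter_comm, Ioi_inter_Ioo,
      max_eq_left hv.1.le, hGk v]
    rw [integral_const_mul]
    rw [← integral_Ioc_eq_integral_Ioo, ← intervalIntegral.integral_of_le hv.2.le,
      kernel_integral hv0 hv.2]
  have hnorm : ∀ v ∈ Ioo E₀ E,
      (∫ u, ‖H (u, v)‖ ∂ν) = |g v| * (π / Real.sqrt (E * v)) := by
    intro v hv
    have hv0 : 0 < v := hE₀.trans hv.1
    have habs : ∀ u ∈ Ioo E₀ E, ‖H (u, v)‖
        = (Ioi v).indicator (fun u => |g v| * (1 / (u * Real.sqrt (E - u) * Real.sqrt (u - v)))) u := by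
      intro u hu
      have hu0 : 0 < u := hE₀.trans hu.1
      rw [congrFun (hrep v) u]
      by_cases hc : v < u
      · rw [Set.indicator_of_mem (mem_Ioi.mpr hc), Set.indicator_of_mem (mem_Ioi.mpr hc)]
        rw [congrFun (hGk v) u]
        have hEup : 0 ≤ Real.sqrt (E - u) := Real.sqrt_nonneg _
        have huvp : 0 ≤ Real.sqrt (u - v) := Real.sqrt_nonneg _
        have hprod : 0 ≤ u * Real.sqrt (E - u) * Real.sqrt (u - v) := by positivity
        rw [Real.norm_eq_abs, abs_mul, abs_of_nonneg (by positivity : (0:ℝ) ≤ 1 / (u * Real.sqrt (E - u) * Real.sqrt (u - v)))]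
      · rw [Set.indicator_of_notMem (by simpa using hc), Set.indicator_of_notMem (by simpa using hc),
          norm_zero]
    rw [hν, show ∫ u, ‖H (u, v)‖ ∂volume.restrict (Ioo E₀ E)
        = ∫ u in Ioo E₀ E, ‖H (u, v)‖ from rfl,
      setIntegral_congr_fun measurableSet_Ioo habs,
      setIntegral_indicator measurableSet_Ioi, inter_comm, Ioi_inter_Ioo,
      max_eq_left hv.1.le, integral_const_mul,
      ← integral_Ioc_eq_integral_Ioo, ← intervalIntegral.integral_of_le hv.2.le,
      kernel_integral hv0 hv.2]
  -- joint integrability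
  have hH_int : Integrable H (ν.prod ν) := by
    rw [MeasureTheory.integrable_prod_iff' hmeas]
    constructor
    · filter_upwards [ae_restrict_mem measurableSet_Ioo] with v hv using hint_u v hv
    · have hcont2 : ContinuousOn (fun v => |g v| * (π / Real.sqrt (E * v))) (Icc E₀ E) := by
        apply ContinuousOn.mul (hg.abs)
        apply ContinuousOn.div continuousOn_const
        · exact (continuous_sqrt.comp (continuous_const.mul continuous_id)).continuousOn
        · intro x hx
          have hx0 : 0 < x := lt_of_lt_of_le hE₀ hx.1
          exact ne_of_gt (Real.sqrt_pos.mpr (by positivity))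
      have hi : IntegrableOn (fun v => |g v| * (π / Real.sqrt (E * v))) (Ioo E₀ E) volume :=
        (hcont2.integrableOn_Icc).mono_set Ioo_subset_Icc_self
      exact hi.congr (by
        filter_upwards [ae_restrict_mem measurableSet_Ioo] with v hv using (hnorm v hv).symm)
  -- inner representation
  have hinner : ∀ u ∈ Ioo E₀ E, (∫ v, H (u, v) ∂ν)
      = (∫ v in E₀..u, g v / Real.sqrt (u - v)) / (u * Real.sqrt (E - u)) := by
    intro u hu
    have hrep2 : (fun v => H (u, v))
        = (Iio u).indicator (fun v => g v / Real.sqrt (u - v) / (u * Real.sqrt (E - u))) := by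
      funext v
      by_cases hc : v < u
      · rw [Set.indicator_of_mem (mem_Iio.mpr hc), hH,
          Set.indicator_of_mem (show (u, v) ∈ S from hc)]
      · rw [Set.indicator_of_notMem (by simpa using hc), hH,
          Set.indicator_of_notMem (by simpa [hS] using hc)]
    rw [hν, show ∫ v, H (u, v) ∂volume.restrict (Ioo E₀ E)
        = ∫ v in Ioo E₀ E, H (u, v) from rfl]
    rw [show (fun v => H (u, v)) = _ from hrep2]  -- may fail; fallback below
    rw [setIntegral_indicator measurableSet_Iio, Ioo_inter_Iio, min_eq_right hu.2.le,
      ← integral_Ioc_eq_integral_Ioo, ← intervalIntegral.integral_of_le hu.1.le,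
      intervalIntegral.integral_div]
  -- Part 2
  have part2 : IntervalIntegrable
      (fun u => (∫ v in E₀..u, g v / Real.sqrt (u - v)) / (u * Real.sqrt (E - u)))
      volume E₀ E := by
    have h2 : Integrable (fun u => ∫ v, H (u, v) ∂ν) ν := hH_int.integral_prod_left
    have h3 : Integrable
        (fun u => (∫ v in E₀..u, g v / Real.sqrt (u - v)) / (u * Real.sqrt (E - u))) ν :=
      h2.congr (by
        filter_upwards [ae_restrict_mem measurableSet_Ioo] with u hu using hinner u hu)
    exact (intervalIntegrable_iff_integrableOn_Ioo_of_le h.le).mpr h3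
  -- Part 3
  have part3 : IntervalIntegrable (fun v => g v / Real.sqrt (E * v)) volume E₀ E := by
    apply ContinuousOn.intervalIntegrable
    rw [uIcc_of_le h.le]
    apply hg.div ((continuous_sqrt.comp (continuous_const.mul continuous_id)).continuousOn)
    intro x hx
    have hx0 : 0 < x := lt_of_lt_of_le hE₀ hx.1
    exact ne_of_gt (Real.sqrt_pos.mpr (mul_pos hE hx0))
  refine ⟨part1, part2, part3, ?_⟩
  -- Part 4: the identity
  have hswap : ∫ u, (∫ v, H (u, v) ∂ν) ∂ν = ∫ v, (∫ u, H (u, v) ∂ν) ∂ν :=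
    MeasureTheory.integral_integral_swap (by exact hH_int)
  calc ∫ u in E₀..E, (∫ v in E₀..u, g v / Real.sqrt (u - v)) / (u * Real.sqrt (E - u))
      = ∫ u in Ioo E₀ E, (∫ v in E₀..u, g v / Real.sqrt (u - v)) / (u * Real.sqrt (E - u)) := by
        rw [intervalIntegral.integral_of_le h.le, integral_Ioc_eq_integral_Ioo]
    _ = ∫ u in Ioo E₀ E, (∫ v, H (u, v) ∂ν) := by
        exact setIntegral_congr_fun measurableSet_Ioo (fun u hu => (hinner u hu).symm)
    _ = ∫ v, (∫ u, H (u, v) ∂ν) ∂ν := hswap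
    _ = ∫ v in Ioo E₀ E, g v * (π / Real.sqrt (E * v)) := by
        exact setIntegral_congr_fun measurableSet_Ioo (fun v hv => houter v hv)
    _ = ∫ v in E₀..E, g v * (π / Real.sqrt (E * v)) := by
        rw [intervalIntegral.integral_of_le h.le, integral_Ioc_eq_integral_Ioo]
    _ = π * ∫ v in E₀..E, g v / Real.sqrt (E * v) := by
        rw [← intervalIntegral.integral_const_mul]
        apply intervalIntegral.integral_congr
        intro x _
        show g x * (π / Real.sqrt (E * x)) = π * (g x / Real.sqrt (E * x))
        ring
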